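/- A finite simplicial graph Γ satisfies condition (A2') if and only if for every vertex x of Γ and every x-component C, the partial conjugation π^x_C is virtually obtained from dominated components. -/

import Mathlib

open SimpleGraph

namespace RaagPaper

/-- The star of a vertex: the vertex together with its neighbours. -/
def star {V : Type} (G : SimpleGraph V) (v : V) : Set V := insert v (G.neighborSet v)

/-- Domination: `u ≤ v` iff `lk(u) ⊆ st(v)`. -/
def Dom {V : Type} (G : SimpleGraph V) (u v : V) : Prop := G.neighborSet u ⊆ star G v

/-- Domination-equivalence of vertices. -/
def EquivDom {V : Type} (G : SimpleGraph V) (u v : V) : Prop := Dom G u v ∧ Dom G v u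

/-- The domination-equivalence class of a vertex. -/
def eqClass {V : Type} (G : SimpleGraph V) (x : V) : Set V := {v | EquivDom G v x}

/-- `C` is (the vertex set of) a connected component of the subgraph of `G` induced on `S`. -/
def IsCC {V : Type} (G : SimpleGraph V) (S : Set V) (C : Set V) : Prop :=
  ∃ v : S, C = {w : V | ∃ h : w ∈ S, (G.induce S).Reachable ⟨w, h⟩ v}

/-- `(x,y|z)` is a separating intersection of links (SIL). -/
def IsSIL {V : Type} (G : SimpleGraph V) (x y z : V) : Prop :=
  x ≠ y ∧ x ≠ z ∧ y ≠ z ∧ ¬ G.Adj x y ∧ ¬ G.Adj x z ∧ ¬ G.Adj y z ∧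
  ∀ C : Set V, IsCC G ((G.neighborSet x ∩ G.neighborSet y)ᶜ) C → z ∈ C → x ∉ C ∧ y ∉ C

/-- The graph has no SIL. -/
def HasNoSIL {V : Type} (G : SimpleGraph V) : Prop := ∀ x y z, ¬ IsSIL G x y z

/-- `D` is a (possibly empty) union of connected components of `Γ ∖ st(x)`. -/
def IsUnionCC {V : Type} (G : SimpleGraph V) (x : V) (D : Set V) : Prop :=
  ∃ 𝒞 : Set (Set V), (∀ C ∈ 𝒞, IsCC G ((star G x)ᶜ) C) ∧ D = ⋃₀ 𝒞


/-- Defining relators of the RAAG: commutators of adjacent vertices. -/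
def Rels {V : Type} (G : SimpleGraph V) : Set (FreeGroup V) :=
  {r | ∃ u v : V, G.Adj u v ∧
    r = FreeGroup.of u * FreeGroup.of v * (FreeGroup.of u)⁻¹ * (FreeGroup.of v)⁻¹}

/-- The right-angled Artin group on `G`. -/
abbrev Raag {V : Type} (G : SimpleGraph V) : Type := PresentedGroup (Rels G)

/-- The generator of `Raag G` corresponding to a vertex. -/
def gen {V : Type} (G : SimpleGraph V) (v : V) : Raag G := PresentedGroup.of v

/-- `φ` is the partial conjugation conjugating the vertices of `C` by `x`. -/
def IsPartialConj {V : Type} (G : SimpleGraph V) (x : V) (C : Set V)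
    (φ : MulAut (Raag G)) : Prop :=
  (∀ v ∈ C, φ (gen G v) = (gen G x)⁻¹ * gen G v * gen G x) ∧
  (∀ v ∉ C, φ (gen G v) = gen G v)

/-- `φ` is the transvection `R_u^v`, sending `u ↦ uv` and fixing all other vertices. -/
def IsTransvection {V : Type} (G : SimpleGraph V) (u v : V)
    (φ : MulAut (Raag G)) : Prop :=
  φ (gen G u) = gen G u * gen G v ∧ ∀ w : V, w ≠ u → φ (gen G w) = gen G w

/-- The subgroup of inner automorphisms of a group. -/
def Inn (H : Type*) [Group H] : Subgroup (MulAut H) := (MulAut.conj : H →* MulAut H).range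

instance Inn.normal (H : Type*) [Group H] : (Inn H).Normal := by
  constructor
  rintro a ⟨g, rfl⟩ f
  refine ⟨f g, ?_⟩
  ext x
  simp [MulAut.conj_apply, map_mul, map_inv]

/-- The outer automorphism group. -/
abbrev Out (H : Type*) [Group H] : Type _ := MulAut H ⧸ Inn H

/-- Projection from automorphisms to outer automorphisms. -/
def toOut (H : Type*) [Group H] : MulAut H →* Out H := QuotientGroup.mk' (Inn H)

/-- The homomorphism sending an automorphism to the induced automorphism of the
abelianization. -/
def abAut (H : Type*) [Group H] : MulAut H →* MulAut (Abelianization H) where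
  toFun e := MulEquiv.abelianizationCongr e
  map_one' := by
    apply MulEquiv.toMonoidHom_injective
    apply Abelianization.hom_ext
    ext x
    simp [abelianizationCongr_of]
  map_mul' f g := by
    apply MulEquiv.toMonoidHom_injective
    apply Abelianization.hom_ext
    ext x
    simp [abelianizationCongr_of, MulAut.mul_apply]

lemma abAut_inn (H : Type*) [Group H] : ∀ a ∈ Inn H, abAut H a = 1 := by
  rintro a ⟨g, rfl⟩
  apply MulEquiv.toMonoidHom_injective
  apply Abelianization.hom_ext
  ext x
  simp [abAut, abelianizationCongr_of, MulAut.conj_apply, mul_comm]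

/-- The standard map `ρ : Out(H) → Aut(Hᵃᵇ)` induced by acting on the abelianization. -/
def rhoOut (H : Type*) [Group H] : Out H →* MulAut (Abelianization H) :=
  QuotientGroup.lift (Inn H) (abAut H) (abAut_inn H)

end RaagPaper

namespace RaagPaper

/-- Auxiliary definition: some nonzero power of `π^x_C` can be written in `Out(A_Γ)` as a
product of partial conjugations (or their inverses) with multiplier `x` whose supports
are `y_i`-components for vertices `y_i` satisfying the predicate `P`. -/
def VirtObtAux {V : Type} (G : SimpleGraph V) (x : V) (C : Set V) (P : V → Prop) : Prop :=
  ∃ n : ℤ, n ≠ 0 ∧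
    ∃ (m : ℕ) (y : Fin m → V) (D : Fin m → Set V) (ε : Fin m → ℤ)
      (φ : MulAut (Raag G)) (ψ : Fin m → MulAut (Raag G)),
      (∀ i, P (y i)) ∧
      (∀ i, IsCC G ((star G (y i))ᶜ) (D i)) ∧
      (∀ i, ε i = 1 ∨ ε i = -1) ∧
      IsPartialConj G x C φ ∧
      (∀ i, IsPartialConj G x (D i) (ψ i)) ∧
      (toOut (Raag G) φ) ^ n
        = (List.ofFn fun i => (toOut (Raag G) (ψ i)) ^ (ε i)).prod

/-- `π^x_C` is virtually obtained from dominated components. -/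
def VirtObtDom {V : Type} (G : SimpleGraph V) (x : V) (C : Set V) : Prop :=
  VirtObtAux G x C (fun y => Dom G y x ∧ y ≠ x)

/-- `π^x_C` is virtually obtained from dominated non-equivalent components. -/
def VirtObtNE {V : Type} (G : SimpleGraph V) (x : V) (C : Set V) : Prop :=
  VirtObtAux G x C (fun y => Dom G y x ∧ ¬ EquivDom G y x)

/-- The pair `(X,C)`, of an equivalence class and an `X`-component, is non-principal. -/
def NonPrincipal {V : Type} (G : SimpleGraph V) (X C : Set V) : Prop :=
  ∀ x ∈ X, IsCC G ((star G x)ᶜ) C → VirtObtNE G x C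

/-- The pair `(X,C)` is principal. -/
def Principal {V : Type} (G : SimpleGraph V) (X C : Set V) : Prop :=
  ¬ NonPrincipal G X C

/-- Condition (A2'): every principal pair `(X,C)` has `|X| > 1`. -/
def CondA2' {V : Type} (G : SimpleGraph V) : Prop :=
  ∀ X C : Set V, (∃ x : V, X = eqClass G x) → (∃ x ∈ X, IsCC G ((star G x)ᶜ) C) →
    Principal G X C → X.Nontrivial

end RaagPaper

namespace RaagPaper
variable {V : Type} (G : SimpleGraph V)

lemma dom_refl (x : V) : Dom G x x := fun v hv => Set.mem_insert_of_mem _ hv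

lemma gen_commute {u v : V} (h : G.Adj u v) : Commute (gen G u) (gen G v) := by
  have h1 : PresentedGroup.mk (Rels G)
      (FreeGroup.of u * FreeGroup.of v * (FreeGroup.of u)⁻¹ * (FreeGroup.of v)⁻¹) = 1 := by
    apply (QuotientGroup.eq_one_iff _).mpr
    exact Subgroup.subset_normalClosure ⟨u, v, h, rfl⟩
  simp only [map_mul, map_inv] at h1
  have h2 : gen G u * gen G v * (gen G u)⁻¹ * (gen G v)⁻¹ = 1 := h1
  have h3 : gen G u * gen G v * (gen G u)⁻¹ = gen G v := by
    have := mul_inv_eq_iff_eq_mul.mp h2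
    simpa using this
  have h4 := mul_inv_eq_iff_eq_mul.mp h3
  exact h4

lemma gen_commute' {u v : V} (h : G.Adj u v) :
    (gen G u)⁻¹ * gen G v * gen G u = gen G v := by
  have h1 := (gen_commute G h).eq
  rw [mul_assoc, ← h1, ← mul_assoc, inv_mul_cancel, one_mul]

/-- Conditions under which "conjugate `S` by `x`" defines an automorphism. -/
def Good (x : V) (S : Set V) : Prop :=
  (∀ u ∈ S, ¬ G.Adj x u) ∧ (∀ u ∈ S, ∀ v, G.Adj u v → v ∈ S ∨ v = x ∨ G.Adj x v)

open Classical in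
noncomputable def pcFun (x : V) (S : Set V) (g : Raag G) : V → Raag G := fun v =>
  if v ∈ S then g⁻¹ * gen G v * g else gen G v

lemma pcFun_mem {x : V} {S : Set V} {g : Raag G} {v : V} (hv : v ∈ S) :
    pcFun G x S g v = g⁻¹ * gen G v * g := by simp [pcFun, hv]

lemma pcFun_not_mem {x : V} {S : Set V} {g : Raag G} {v : V} (hv : v ∉ S) :
    pcFun G x S g v = gen G v := by simp [pcFun, hv]

lemma pcFun_x {x : V} (S : Set V) {g : Raag G} (hg : Commute g (gen G x)) :
    pcFun G x S g x = gen G x := by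
  unfold pcFun
  split
  · rw [mul_assoc, ← hg.eq, ← mul_assoc]; group
  · rfl

lemma toGroup_gen {f : V → Raag G} (h : ∀ r ∈ Rels G, FreeGroup.lift f r = 1) (v : V) :
    PresentedGroup.toGroup h (gen G v) = f v := PresentedGroup.toGroup.of h

lemma pcFun_rels {x : V} {S : Set V} (hS : Good G x S) {g : Raag G}
    (hg : ∀ w, G.Adj x w → Commute g (gen G w)) :
    ∀ r ∈ Rels G, FreeGroup.lift (pcFun G x S g) r = 1 := by
  rintro r ⟨u, v, huv, rfl⟩
  simp only [map_mul, map_inv, FreeGroup.lift_apply_of]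
  have base : Commute (gen G u) (gen G v) := gen_commute G huv
  have key : Commute (pcFun G x S g u) (pcFun G x S g v) := by
    have case1 : ∀ a b : V, G.Adj a b → Commute (gen G a) (gen G b) → a ∈ S → b ∉ S →
        Commute (pcFun G x S g a) (pcFun G x S g b) := by
      intro a b hab hcab ha hb
      rcases (hS.2 a ha b hab) with h | h | h
      · exact absurd h hb
      · exact absurd (h ▸ hab.symm) (hS.1 a ha)
      · have hgb : Commute g (gen G b) := hg b h
        rw [pcFun_mem G ha, pcFun_not_mem G hb]
        exact (hgb.inv_left.mul_left hcab).mul_left hgb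
    by_cases hu : u ∈ S <;> by_cases hv : v ∈ S
    · rw [pcFun_mem G hu, pcFun_mem G hv]
      have := base.map (MulAut.conj g⁻¹).toMonoidHom
      simpa [MulAut.conj_apply, mul_assoc] using this
    · exact case1 u v huv base hu hv
    · exact (case1 v u huv.symm base.symm hv hu).symm
    · rw [pcFun_not_mem G hu, pcFun_not_mem G hv]; exact base
  rw [key.eq]; group

/-- The partial conjugation automorphism: conjugate the vertices of `S` by `x`. -/
noncomputable def pc {x : V} {S : Set V} (hS : Good G x S) : MulAut (Raag G) := by
  refine MonoidHom.toMulEquiv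
    (PresentedGroup.toGroup (pcFun_rels G hS (g := gen G x) (fun w hw => gen_commute G hw)))
    (PresentedGroup.toGroup (pcFun_rels G hS (g := (gen G x)⁻¹)
      (fun w hw => (gen_commute G hw).inv_left))) ?_ ?_ <;>
  · apply PresentedGroup.ext
    intro v
    simp only [MonoidHom.comp_apply, MonoidHom.id_apply,
      show ∀ w, (PresentedGroup.of w : Raag G) = gen G w from fun _ => rfl]
    by_cases hv : v ∈ S
    · rw [toGroup_gen, pcFun_mem G hv]
      simp only [map_mul, map_inv, toGroup_gen]
      rw [pcFun_mem G hv,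
        pcFun_x G S (by first | exact Commute.refl _ | exact (Commute.refl _).inv_left)]
      group
    · rw [toGroup_gen, pcFun_not_mem G hv, toGroup_gen, pcFun_not_mem G hv]

lemma pc_apply {x : V} {S : Set V} (hS : Good G x S) (a : Raag G) :
    pc G hS a = PresentedGroup.toGroup
      (pcFun_rels G hS (g := gen G x) (fun w hw => gen_commute G hw)) a := rfl

lemma pc_gen_mem {x : V} {S : Set V} (hS : Good G x S) {v : V} (hv : v ∈ S) :
    pc G hS (gen G v) = (gen G x)⁻¹ * gen G v * gen G x := by
  rw [pc_apply, toGroup_gen, pcFun_mem G hv]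

lemma pc_gen_not_mem {x : V} {S : Set V} (hS : Good G x S) {v : V} (hv : v ∉ S) :
    pc G hS (gen G v) = gen G v := by
  rw [pc_apply, toGroup_gen, pcFun_not_mem G hv]

lemma pc_isPartialConj {x : V} {S : Set V} (hS : Good G x S) :
    IsPartialConj G x S (pc G hS) :=
  ⟨fun v hv => pc_gen_mem G hS hv, fun v hv => pc_gen_not_mem G hS hv⟩

lemma isPartialConj_gen_x {x : V} {S : Set V} {φ : MulAut (Raag G)}
    (h : IsPartialConj G x S φ) : φ (gen G x) = gen G x := by
  by_cases hx : x ∈ S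
  · rw [h.1 x hx]; group
  · exact h.2 x hx

lemma mulAut_ext {φ ψ : MulAut (Raag G)} (h : ∀ v, φ (gen G v) = ψ (gen G v)) : φ = ψ := by
  apply MulEquiv.toMonoidHom_injective
  exact PresentedGroup.ext h

lemma mem_star_iff {x v : V} : v ∈ star G x ↔ v = x ∨ G.Adj x v := by
  simp [star]

lemma reach_of_mem_support {α : Type} {H : SimpleGraph α} {u v w : α}
    (p : H.Walk u v) (hw : w ∈ p.support) : H.Reachable w v := by
  classical
  exact ⟨p.dropUntil w hw⟩

lemma walk_transfer {S T : Set V} : ∀ {u v : S} (p : (G.induce S).Walk u v)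
    (_ : ∀ w ∈ p.support, (w : V) ∈ T) (hu : ↑u ∈ T) (hv : ↑v ∈ T),
    (G.induce T).Reachable ⟨u, hu⟩ ⟨v, hv⟩ := by
  intro u v p
  induction p with
  | nil => intro _ hu hv; exact Reachable.refl _
  | @cons a m b h q ih =>
      intro hT hu hv
      have hm : (m : V) ∈ T := hT m (by simp [Walk.support_cons, q.start_mem_support])
      have hadj : (G.induce T).Adj ⟨a, hu⟩ ⟨m, hm⟩ := by
        have : G.Adj (a : V) (m : V) := by simpa using h
        simpa using this
      exact Reachable.trans hadj.reachable
        (ih (fun w hw => hT w (by simp [Walk.support_cons, hw])) hm hv)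

/-- The connected component of `c` in the induced subgraph on `S`. -/
def compOf (S : Set V) (c : V) (hc : c ∈ S) : Set V :=
  {w | ∃ h : w ∈ S, (G.induce S).Reachable ⟨w, h⟩ ⟨c, hc⟩}

lemma compOf_isCC (S : Set V) (c : V) (hc : c ∈ S) : IsCC G S (compOf G S c hc) :=
  ⟨⟨c, hc⟩, rfl⟩

lemma mem_compOf_self (S : Set V) (c : V) (hc : c ∈ S) : c ∈ compOf G S c hc :=
  ⟨hc, Reachable.refl _⟩

lemma compOf_subset (S : Set V) (c : V) (hc : c ∈ S) : compOf G S c hc ⊆ S :=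
  fun _ hw => hw.1

lemma isCC_iff (S C : Set V) :
    IsCC G S C ↔ ∃ (c : V) (hc : c ∈ S), C = compOf G S c hc := by
  constructor
  · rintro ⟨v, rfl⟩
    exact ⟨v, v.2, rfl⟩
  · rintro ⟨c, hc, rfl⟩
    exact compOf_isCC G S c hc

lemma compOf_eq_of_mem {S : Set V} {c w : V} {hc : c ∈ S} (hw : w ∈ compOf G S c hc) :
    compOf G S w hw.1 = compOf G S c hc := by
  obtain ⟨hwS, hr⟩ := hw
  ext z
  exact ⟨fun ⟨hz, h⟩ => ⟨hz, h.trans hr⟩, fun ⟨hz, h⟩ => ⟨hz, h.trans hr.symm⟩⟩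

lemma cc_eq_of_not_disjoint {S C₁ C₂ : Set V} (h₁ : IsCC G S C₁) (h₂ : IsCC G S C₂)
    (h : ¬ Disjoint C₁ C₂) : C₁ = C₂ := by
  rw [isCC_iff] at h₁ h₂
  obtain ⟨c₁, hc₁, rfl⟩ := h₁
  obtain ⟨c₂, hc₂, rfl⟩ := h₂
  rw [Set.not_disjoint_iff] at h
  obtain ⟨w, hw₁, hw₂⟩ := h
  rw [← compOf_eq_of_mem G hw₁, ← compOf_eq_of_mem G hw₂]

lemma compOf_mem_of_adj {S : Set V} {c u v : V} {hc : c ∈ S}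
    (hu : u ∈ compOf G S c hc) (hv : v ∈ S) (huv : G.Adj u v) : v ∈ compOf G S c hc := by
  obtain ⟨huS, hr⟩ := hu
  refine ⟨hv, Reachable.trans ?_ hr⟩
  have : (G.induce S).Adj ⟨v, hv⟩ ⟨u, huS⟩ := by simpa using huv.symm
  exact this.reachable

lemma reach_isolated {S : Set V} {z : V} {hz : z ∈ S}
    (hiso : ∀ w, G.Adj z w → w ∉ S) {v : S} (h : (G.induce S).Reachable ⟨z, hz⟩ v) :
    (v : V) = z := by
  obtain ⟨p⟩ := h
  cases p with
  | nil => rfl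
  | @cons _ m _ h q =>
      exfalso
      have : G.Adj z (m : V) := by simpa using h
      exact hiso m this m.2

lemma cc_singleton {S C : Set V} (hC : IsCC G S C) {z : V} (hz : z ∈ C)
    (hiso : ∀ w, G.Adj z w → w ∉ S) : C = {z} := by
  rw [isCC_iff] at hC
  obtain ⟨c, hc, rfl⟩ := hC
  obtain ⟨hzS, hr⟩ := hz
  obtain rfl : c = z := reach_isolated G hiso hr
  ext w
  simp only [Set.mem_singleton_iff]
  constructor
  · rintro ⟨hw, hrw⟩
    exact reach_isolated G hiso hrw.symm
  · rintro rfl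
    exact mem_compOf_self G S _ hc


lemma good_comp {x : V} {C : Set V} (hC : IsCC G ((star G x)ᶜ) C) : Good G x C := by
  obtain ⟨c, hc, rfl⟩ := (isCC_iff G _ _).mp hC
  have hsub := compOf_subset G ((star G x)ᶜ) c hc
  constructor
  · intro u hu hadj
    exact hsub hu (mem_star_iff G |>.mpr (Or.inr hadj))
  · intro u hu v hadj
    by_cases hv : v ∈ (star G x)ᶜ
    · exact Or.inl (compOf_mem_of_adj G hu hv hadj)
    · rcases (mem_star_iff G).mp (not_not.mp hv) with h | h
      · exact Or.inr (Or.inl h)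
      · exact Or.inr (Or.inr h)

lemma good_comp_dom {x y : V} (hxy : Dom G x y) (hyx : Dom G y x) (hnadj : ¬ G.Adj x y)
    {D : Set V} (hD : IsCC G ((star G y)ᶜ) D) : Good G x D := by
  obtain ⟨c, hc, rfl⟩ := (isCC_iff G _ _).mp hD
  have hsub := compOf_subset G ((star G y)ᶜ) c hc
  constructor
  · intro u hu hadj
    exact hsub hu (hxy hadj)
  · intro u hu v hadj
    by_cases hv : v ∈ (star G y)ᶜ
    · exact Or.inl (compOf_mem_of_adj G hu hv hadj)
    · rcases (mem_star_iff G).mp (not_not.mp hv) with rfl | h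
      · rcases (mem_star_iff G).mp (hyx hadj.symm) with rfl | h2
        · exact absurd hadj hnadj
        · exact absurd (hsub hu (hxy h2)) (fun hh => hh)
      · rcases (mem_star_iff G).mp (hyx h) with rfl | h2
        · exact Or.inr (Or.inl rfl)
        · exact Or.inr (Or.inr h2)

lemma lk_eq_of_equiv {x y : V} (he : EquivDom G y x) (hnadj : ¬ G.Adj x y) :
    G.neighborSet x = G.neighborSet y := by
  ext v
  constructor
  · intro hv
    rcases (mem_star_iff G).mp (he.2 hv) with rfl | h
    · exact absurd hv hnadj
    · exact h
  · intro hv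
    rcases (mem_star_iff G).mp (he.1 hv) with rfl | h
    · exact absurd hv (fun hh => hnadj hh.symm)
    · exact h

lemma star_eq_of_equiv_adj {x y : V} (he : EquivDom G y x) (hadj : G.Adj x y) :
    star G x = star G y := by
  ext v
  simp only [mem_star_iff]
  constructor
  · rintro (rfl | h)
    · exact Or.inr hadj.symm
    · rcases (mem_star_iff G).mp (he.2 h) with rfl | h2
      · exact Or.inl rfl
      · exact Or.inr h2
  · rintro (rfl | h)
    · exact Or.inr hadj
    · rcases (mem_star_iff G).mp (he.1 h) with rfl | h2
      · exact Or.inl rfl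
      · exact Or.inr h2

section Transfer
variable {x y : V}

/-- If `lk x = lk y` (`x,y` non-adjacent, equivalent) then `y` is isolated in `Γ ∖ st(x)`. -/
lemma isolated_y (hLk : G.neighborSet x = G.neighborSet y) :
    ∀ w, G.Adj y w → w ∉ (star G x)ᶜ := by
  intro w hw hmem
  have : w ∈ G.neighborSet x := hLk ▸ (hw : w ∈ G.neighborSet y)
  exact hmem ((mem_star_iff G).mpr (Or.inr this))

lemma adj_x_of_adj_y {x y : V} (hLk : G.neighborSet x = G.neighborSet y)
    {w : V} (h : G.Adj y w) : G.Adj x w := by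
  have h1 : w ∈ G.neighborSet y := h
  rw [← hLk] at h1
  exact h1

lemma comp_transfer (hLk : G.neighborSet x = G.neighborSet y)
    {C : Set V} (hC : IsCC G ((star G x)ᶜ) C) (hyC : y ∉ C) :
    IsCC G ((star G y)ᶜ) C := by
  obtain ⟨c, hc, rfl⟩ := (isCC_iff G _ _).mp hC
  have hcx : c ∈ (star G x)ᶜ := hc
  have hc' : c ∈ (star G y)ᶜ := by
    intro hmem
    rcases (mem_star_iff G).mp hmem with rfl | hadj
    · exact hyC (mem_compOf_self G _ c hc)
    · exact hcx ((mem_star_iff G).mpr (Or.inr (adj_x_of_adj_y G hLk hadj)))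
  rw [isCC_iff]
  refine ⟨c, hc', ?_⟩
  ext w
  constructor
  · rintro ⟨hw, hr⟩
    obtain ⟨p⟩ := hr
    have hsup : ∀ z ∈ p.support, (z : V) ∈ (star G y)ᶜ := by
      intro z hz hmem
      have hzC : (z : V) ∈ compOf G ((star G x)ᶜ) c hc := by
        refine ⟨z.2, ?_⟩
        have := reach_of_mem_support p hz
        simpa using this
      rcases (mem_star_iff G).mp hmem with heq | hadj
      · exact hyC (heq ▸ hzC)
      · exact z.2 ((mem_star_iff G).mpr (Or.inr (adj_x_of_adj_y G hLk hadj)))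
    have hw' : w ∈ (star G y)ᶜ := hsup _ p.start_mem_support
    exact ⟨hw', walk_transfer G p hsup hw' hc'⟩
  · rintro ⟨hw, hr⟩
    obtain ⟨p⟩ := hr
    have hsup : ∀ z ∈ p.support, (z : V) ∈ (star G x)ᶜ := by
      intro z hz hmem
      rcases (mem_star_iff G).mp hmem with heq | hadj
      · -- ↑z = x : but x is isolated in Γ ∖ st(y), so c = x, contradiction
        have hiso : ∀ w', G.Adj x w' → w' ∉ (star G y)ᶜ := by
          intro w' hw' hmem2
          exact hmem2 ((mem_star_iff G).mpr (Or.inr (adj_x_of_adj_y G hLk.symm hw')))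
        have hzx : (z : V) ∈ (star G y)ᶜ := z.2
        have hzeq : z = ⟨x, heq ▸ z.2⟩ := Subtype.ext heq
        have hreach : (G.induce ((star G y)ᶜ)).Reachable ⟨x, heq ▸ z.2⟩ ⟨c, hc'⟩ := by
          rw [← hzeq]
          have := reach_of_mem_support p hz
          simpa using this
        have hceq : c = x := reach_isolated G hiso hreach
        exact hcx ((mem_star_iff G).mpr (Or.inl hceq))
      · exact z.2 ((mem_star_iff G).mpr (Or.inr (adj_x_of_adj_y G hLk.symm hadj)))
    have hw' : w ∈ (star G x)ᶜ := hsup _ p.start_mem_support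
    exact ⟨hw', walk_transfer G p hsup hw' hcx⟩
end Transfer

open Classical in
lemma prod_pc_apply (x : V) (p : List (Set V × MulAut (Raag G)))
    (hp : ∀ q ∈ p, IsPartialConj G x q.1 q.2)
    (hdisj : p.Pairwise (fun a b => Disjoint a.1 b.1)) (v : V) :
    (p.map Prod.snd).prod (gen G v) =
      if ∃ q ∈ p, v ∈ q.1 then (gen G x)⁻¹ * gen G v * gen G x else gen G v := by
  classical
  induction p with
  | nil => simp
  | cons q rest ih =>
      have hq := hp q List.mem_cons_self
      have hrest : ∀ r ∈ rest, IsPartialConj G x r.1 r.2 :=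
        fun r hr => hp r (List.mem_cons_of_mem q hr)
      have hdisj' : rest.Pairwise (fun a b => Disjoint a.1 b.1) :=
        (List.pairwise_cons.mp hdisj).2
      have hdq : ∀ r ∈ rest, Disjoint q.1 r.1 := (List.pairwise_cons.mp hdisj).1
      have hqx : q.2 (gen G x) = gen G x := isPartialConj_gen_x G hq
      simp only [List.map_cons, List.prod_cons, MulAut.mul_apply]
      rw [ih hrest hdisj']
      by_cases hv : ∃ r ∈ rest, v ∈ r.1
      · obtain ⟨r, hr, hvr⟩ := hv
        have hvq : v ∉ q.1 := fun hvq => (hdq r hr).ne_of_mem hvq hvr rfl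
        rw [if_pos (⟨r, hr, hvr⟩ : ∃ r ∈ rest, v ∈ r.1),
          if_pos (⟨r, List.mem_cons_of_mem q hr, hvr⟩ : ∃ r' ∈ q :: rest, v ∈ r'.1)]
        simp only [map_mul, map_inv, hqx, hq.2 v hvq]
      · rw [if_neg hv]
        by_cases hvq : v ∈ q.1
        · rw [hq.1 v hvq, if_pos ⟨q, List.mem_cons_self, hvq⟩]
        · rw [hq.2 v hvq, if_neg (by
            rintro ⟨r, hr, hvr⟩
            rcases List.mem_cons.mp hr with rfl | hr'
            · exact hvq hvr
            · exact hv ⟨r, hr', hvr⟩)]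

lemma virtObtAux_mono {x : V} {C : Set V} {P Q : V → Prop} (h : ∀ v, P v → Q v) :
    VirtObtAux G x C P → VirtObtAux G x C Q := by
  rintro ⟨n, hn, m, y, D, ε, φ, ψ, h1, h2, h3, h4, h5, h6⟩
  exact ⟨n, hn, m, y, D, ε, φ, ψ, fun i => h (y i) (h1 i), h2, h3, h4, h5, h6⟩

lemma virtObt_single {x : V} {C : Set V} {P : V → Prop} (y : V) (hy : P y)
    (hCy : IsCC G ((star G y)ᶜ) C) {φ : MulAut (Raag G)} (hφ : IsPartialConj G x C φ) :
    VirtObtAux G x C P := by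
  refine ⟨1, one_ne_zero, 1, fun _ => y, fun _ => C, fun _ => 1, φ, fun _ => φ,
    fun _ => hy, fun _ => hCy, fun _ => Or.inl rfl, hφ, fun _ => hφ, ?_⟩
  simp

open Classical in
lemma virtObt_singleton_y [Fintype V] {x y : V} (he : EquivDom G y x) (hnadj : ¬ G.Adj x y)
    (hC : IsCC G ((star G x)ᶜ) {y}) : VirtObtDom G x {y} := by
  have hLk : G.neighborSet x = G.neighborSet y := lk_eq_of_equiv G he hnadj
  have hyx : y ≠ x := by
    rw [isCC_iff] at hC
    obtain ⟨c, hc, hEq⟩ := hC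
    have hy : y ∈ compOf G ((star G x)ᶜ) c hc := hEq ▸ rfl
    intro h
    exact (compOf_subset G _ c hc hy) ((mem_star_iff G).mpr (Or.inl h))
  -- the list of all y-components
  have hfin : {D : Set V | IsCC G ((star G y)ᶜ) D}.Finite := Set.toFinite _
  set L : List (Set V) := hfin.toFinset.toList with hL
  have hmemL : ∀ D : Set V, D ∈ L ↔ IsCC G ((star G y)ᶜ) D := by
    intro D
    rw [hL, Finset.mem_toList, Set.Finite.mem_toFinset]
    rfl
  have hnodup : L.Nodup := Finset.nodup_toList _
  -- the corresponding partial conjugations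
  set pairs : List (Set V × MulAut (Raag G)) :=
    L.attach.map (fun d => (d.1,
      pc G (good_comp_dom G he.2 he.1 hnadj ((hmemL d.1).mp d.2)))) with hpairs
  have hpmem : ∀ q ∈ pairs, IsCC G ((star G y)ᶜ) q.1 ∧ IsPartialConj G x q.1 q.2 := by
    intro q hq
    rw [hpairs, List.mem_map] at hq
    obtain ⟨d, _, rfl⟩ := hq
    exact ⟨(hmemL d.1).mp d.2,
      pc_isPartialConj G (good_comp_dom G he.2 he.1 hnadj ((hmemL d.1).mp d.2))⟩
  have hgood : Good G x ({y} : Set V) := good_comp G hC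
  set φ : MulAut (Raag G) := pc G hgood with hφ
  set P : List (Set V × MulAut (Raag G)) := ({y}, φ) :: pairs with hP
  have hPmem : ∀ q ∈ P, IsPartialConj G x q.1 q.2 := by
    intro q hq
    rcases List.mem_cons.mp hq with rfl | hq'
    · exact pc_isPartialConj G hgood
    · exact (hpmem q hq').2
  have hPdisj : P.Pairwise (fun a b => Disjoint a.1 b.1) := by
    rw [hP, List.pairwise_cons]
    constructor
    · intro q hq
      rw [Set.disjoint_singleton_left]
      intro hyq
      obtain ⟨c, hc, hq1⟩ := (isCC_iff G _ _).mp (hpmem q hq).1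
      rw [hq1] at hyq
      exact compOf_subset G _ c hc hyq ((mem_star_iff G).mpr (Or.inl rfl))
    · rw [hpairs, List.pairwise_map]
      have hattach : L.attach.Pairwise (· ≠ ·) := (List.nodup_attach.mpr hnodup)
      refine hattach.imp ?_
      intro a b hab
      by_contra hnd
      exact hab (Subtype.ext (cc_eq_of_not_disjoint G ((hmemL a.1).mp a.2)
        ((hmemL b.1).mp b.2) hnd))
  -- the product of all these partial conjugations is the inner automorphism by x⁻¹
  have hprod : (P.map Prod.snd).prod = MulAut.conj ((gen G x)⁻¹) := by
    apply mulAut_ext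
    intro v
    rw [prod_pc_apply G x P hPmem hPdisj v]
    have hconj : (MulAut.conj ((gen G x)⁻¹)) (gen G v)
        = (gen G x)⁻¹ * gen G v * gen G x := by
      rw [MulAut.conj_apply, inv_inv]
    rw [hconj]
    by_cases hv : ∃ q ∈ P, v ∈ q.1
    · rw [if_pos hv]
    · rw [if_neg hv]
      have hvy : v ≠ y := by
        rintro rfl
        exact hv ⟨({v}, φ), List.mem_cons_self, rfl⟩
      have hvst : v ∈ star G y := by
        by_contra hns
        have hns' : v ∈ (star G y)ᶜ := hns
        refine hv ⟨(compOf G ((star G y)ᶜ) v hns',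
          pc G (good_comp_dom G he.2 he.1 hnadj
            ((hmemL _).mp ((hmemL _).mpr (compOf_isCC G _ v hns'))))), ?_, 
          mem_compOf_self G _ v hns'⟩
        refine List.mem_cons_of_mem _ ?_
        rw [hpairs, List.mem_map]
        exact ⟨⟨compOf G ((star G y)ᶜ) v hns', (hmemL _).mpr (compOf_isCC G _ v hns')⟩,
          List.mem_attach _ _, rfl⟩
      rcases (mem_star_iff G).mp hvst with rfl | hadj
      · exact absurd rfl hvy
      · exact (gen_commute' G (adj_x_of_adj_y G hLk hadj)).symm
  have hinn : toOut (Raag G) ((P.map Prod.snd).prod) = 1 := by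
    rw [hprod]
    exact (QuotientGroup.eq_one_iff _).mpr ⟨(gen G x)⁻¹, rfl⟩
  have hsplit : toOut (Raag G) φ * toOut (Raag G) ((pairs.map Prod.snd).prod) = 1 := by
    rw [← map_mul]
    rw [hP] at hinn
    simpa using hinn
  have hφeq : toOut (Raag G) φ = (toOut (Raag G) ((pairs.map Prod.snd).prod))⁻¹ :=
    eq_inv_of_mul_eq_one_left hsplit
  set rp := pairs.reverse with hrp
  refine ⟨1, one_ne_zero, rp.length, fun _ => y, fun i => (rp.get i).1, fun _ => -1, φ,
    fun i => (rp.get i).2, fun _ => ⟨he.1, hyx⟩, ?_, fun _ => Or.inr rfl,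
    pc_isPartialConj G hgood, ?_, ?_⟩
  · intro i
    have hmem : rp.get i ∈ pairs := by
      rw [← List.mem_reverse, ← hrp]
      exact List.get_mem _ _
    exact (hpmem _ hmem).1
  · intro i
    have hmem : rp.get i ∈ pairs := by
      rw [← List.mem_reverse, ← hrp]
      exact List.get_mem _ _
    exact (hpmem _ hmem).2
  · simp only [zpow_one, zpow_neg_one]
    have h2 : (List.ofFn fun i => (toOut (Raag G) ((rp.get i).2))⁻¹)
        = rp.map (fun q => (toOut (Raag G) q.2)⁻¹) := by
      rw [show rp.map (fun q => (toOut (Raag G) q.2)⁻¹)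
          = (List.ofFn rp.get).map (fun q => (toOut (Raag G) q.2)⁻¹) from by
            rw [List.ofFn_get]]
      rw [List.map_ofFn]
      rfl
    rw [h2, hφeq]
    rw [map_list_prod, List.map_map, hrp, List.map_reverse]
    rw [List.prod_inv_reverse]
    rw [List.map_map]
    rfl

lemma dom_trans {u v w : V} (h1 : Dom G u v) (h2 : Dom G v w) : Dom G u w := by
  intro z hz
  have hz' : G.Adj u z := hz
  rcases (mem_star_iff G).mp (h1 hz) with rfl | hvz
  · -- z = v : show v ∈ star G w
    have huv : u ∈ G.neighborSet z := hz'.symm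
    rcases (mem_star_iff G).mp (h2 huv) with rfl | hwu
    · exact (mem_star_iff G).mpr (Or.inr hz')
    · have hw : w ∈ G.neighborSet u := hwu.symm
      rcases (mem_star_iff G).mp (h1 hw) with heq | hvw
      · exact (mem_star_iff G).mpr (Or.inl heq.symm)
      · exact (mem_star_iff G).mpr (Or.inr hvw.symm)
  · exact h2 hvz

lemma equivDom_trans {u v w : V} (h1 : EquivDom G u v) (h2 : EquivDom G v w) :
    EquivDom G u w :=
  ⟨dom_trans G h1.1 h2.1, dom_trans G h2.2 h1.2⟩

theorem statement9' [Fintype V] :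
    CondA2' G ↔
      ∀ (x : V) (C : Set V), IsCC G ((star G x)ᶜ) C → VirtObtDom G x C := by
  constructor
  · intro hA2 x C hC
    by_cases hne : VirtObtNE G x C
    · refine virtObtAux_mono G (fun v hv => ⟨hv.1, ?_⟩) hne
      rintro rfl
      exact hv.2 ⟨dom_refl G v, dom_refl G v⟩
    · have hxcl : x ∈ eqClass G x := ⟨dom_refl G x, dom_refl G x⟩
      have hPrin : Principal G (eqClass G x) C := fun hnp => hne (hnp x hxcl hC)
      have hnt := hA2 (eqClass G x) C ⟨x, rfl⟩ ⟨x, hxcl, hC⟩ hPrin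
      obtain ⟨a, ha, b, hb, hab⟩ := hnt
      have hy : ∃ y, y ∈ eqClass G x ∧ y ≠ x := by
        by_cases hax : a = x
        · exact ⟨b, hb, fun h => hab (by rw [h, hax])⟩
        · exact ⟨a, ha, hax⟩
      obtain ⟨y, hyc, hyx⟩ := hy
      have he : EquivDom G y x := hyc
      by_cases hadj : G.Adj x y
      · have hst : star G x = star G y := star_eq_of_equiv_adj G he hadj
        have hC2 : IsCC G ((star G y)ᶜ) C := by rw [← hst]; exact hC
        exact virtObt_single G y ⟨he.1, hyx⟩ hC2 (pc_isPartialConj G (good_comp G hC))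
      · by_cases hyC : y ∈ C
        · have hCy : C = {y} :=
            cc_singleton G hC hyC (isolated_y G (lk_eq_of_equiv G he hadj))
          rw [hCy]
          exact virtObt_singleton_y G he hadj (hCy ▸ hC)
        · have hC2 := comp_transfer G (lk_eq_of_equiv G he hadj) hC hyC
          exact virtObt_single G y ⟨he.1, hyx⟩ hC2 (pc_isPartialConj G (good_comp G hC))
  · intro h X C hX hexists hPrin
    obtain ⟨x₀, rfl⟩ := hX
    by_contra hnt
    apply hPrin
    intro x hx hCx
    refine virtObtAux_mono G (fun v hv => ⟨hv.1, ?_⟩) (h x C hCx)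
    intro heqv
    have hsub : (eqClass G x₀).Subsingleton := Set.not_nontrivial_iff.mp hnt
    have hvx : v ∈ eqClass G x₀ := equivDom_trans G heqv hx
    exact hv.2 (hsub hvx hx)

end RaagPaper

open RaagPaper in
/-- `Γ` satisfies condition (A2') iff for every vertex `x` and every
`x`-component `C` the partial conjugation `π^x_C` is virtually obtained from dominated
components. -/
theorem statement9 {V : Type} [Fintype V] (G : SimpleGraph V) :
    CondA2' G ↔
      ∀ (x : V) (C : Set V), IsCC G ((star G x)ᶜ) C → VirtObtDom G x C :=
  RaagPaper.statement9' G
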